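/- Let G = ℤ_{n₁} × ⋯ × ℤ_{n_d} with all n_i ≥ 2 and let S be an inverse-closed subset of G∖{(0,…,0)}. A subset C of G is a total perfect code in Cay(G, S) if and only if for each pair (I, g) with ∅ ≠ I ⊆ {1,…,d} and g = (g₁,…,g_d) ∈ G there exists a polynomial q_I^{(g)}(x₁,…,x_d) ∈ ℤ[x₁,…,x_d] divisible by (∏_{i=1}^d x_i^{g_i})·(∏_{i∈I}(x_i^{n_i} − 1)) such that f_C(x₁,…,x_d)·f_S(x₁,…,x_d) = Σ_{∅≠I⊆{1,…,d}} Σ_{g∈G} q_I^{(g)}(x₁,…,x_d) + ∏_{i=1}^d (Σ_{j=0}^{n_i−1} x_i^j). -/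

import Mathlib

set_option linter.unusedSectionVars false
set_option maxHeartbeats 1000000



/-- The Cayley graph of an additive group `G` with connection set `S`.
(When `S` is inverse-closed and does not contain `0`, `x` and `y` are adjacent
iff `y - x ∈ S`.) -/
def cayley {G : Type*} [AddGroup G] (S : Set G) : SimpleGraph G :=
  SimpleGraph.fromRel (fun x y => y - x ∈ S)

/-- A perfect code in a graph: an independent set such that every vertex outside it
has exactly one neighbour in it. -/
def IsPerfectCode {V : Type*} (Γ : SimpleGraph V) (C : Set V) : Prop :=
  (∀ x ∈ C, ∀ y ∈ C, ¬ Γ.Adj x y) ∧ ∀ v, v ∉ C → ∃! c, c ∈ C ∧ Γ.Adj v c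

/-- A total perfect code in a graph: every vertex has exactly one neighbour in it. -/
def IsTotalPerfectCode {V : Type*} (Γ : SimpleGraph V) (C : Set V) : Prop :=
  ∀ v, ∃! c, c ∈ C ∧ Γ.Adj v c

/-- The subgroup of periods of a subset `X` of an abelian group:
`{g | X + g = X}`. -/
def periods {G : Type*} [AddCommGroup G] (X : Set G) : AddSubgroup G where
  carrier := {g | ∀ x : G, x + g ∈ X ↔ x ∈ X}
  zero_mem' := by simp
  add_mem' := by
    intro a b ha hb x
    rw [← add_assoc]
    exact (hb _).trans (ha x)
  neg_mem' := by
    intro a ha x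
    have := ha (x + -a)
    simpa using this.symm

/-- `(A, B)` is a factorization of the abelian group `G`: every element of `G` can be
uniquely written as `a + b` with `a ∈ A` and `b ∈ B`. -/
def IsFactorization {G : Type*} [AddCommGroup G] (A B : Set G) : Prop :=
  ∀ g : G, ∃! ab : G × G, ab.1 ∈ A ∧ ab.2 ∈ B ∧ ab.1 + ab.2 = g

/-- An abelian group is good if in every factorization of it into two factors
at least one factor is periodic. -/
def IsGood (G : Type*) [AddCommGroup G] : Prop :=
  ∀ A B : Set G, IsFactorization A B → periods A ≠ ⊥ ∨ periods B ≠ ⊥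


section Aux
open MvPolynomial AddMonoidAlgebra Finset


section Aux
variable {d : ℕ} (n : Fin d → ℕ) [∀ i, NeZero (n i)]

noncomputable def Mg (g : ∀ i, ZMod (n i)) : MvPolynomial (Fin d) ℤ :=
  ∏ i, X i ^ (g i).val

noncomputable def Jid : Ideal (MvPolynomial (Fin d) ℤ) :=
  Ideal.span (Set.range fun i : Fin d => (X i : MvPolynomial (Fin d) ℤ) ^ n i - 1)

/-- the ring hom to the group algebra -/
noncomputable def phiA : MvPolynomial (Fin d) ℤ →ₐ[ℤ] AddMonoidAlgebra ℤ (∀ i, ZMod (n i)) :=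
  aeval fun i => AddMonoidAlgebra.single (Pi.single i 1) 1

lemma prod_single_one {G : Type*} [AddCommMonoid G] {ι : Type*} (s : Finset ι) (h : ι → G) :
    ∏ i ∈ s, (AddMonoidAlgebra.single (h i) 1 : AddMonoidAlgebra ℤ G) =
      AddMonoidAlgebra.single (∑ i ∈ s, h i) 1 := by
  induction s using Finset.cons_induction with
  | empty => simp [AddMonoidAlgebra.one_def]
  | cons a s ha ih =>
      rw [Finset.prod_cons, ih, AddMonoidAlgebra.single_mul_single, one_mul, Finset.sum_cons]

lemma phiA_X_pow (i : Fin d) (k : ℕ) :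
    phiA n (X i ^ k) = AddMonoidAlgebra.single (Pi.single i (k : ZMod (n i))) 1 := by
  rw [map_pow, phiA, aeval_X, AddMonoidAlgebra.single_pow, one_pow]
  congr 1
  ext j
  by_cases h : j = i
  · subst h; simp [Pi.single_eq_same]
  · simp [Pi.single_eq_of_ne h]

lemma phiA_Mg (g : ∀ i, ZMod (n i)) : phiA n (Mg n g) = AddMonoidAlgebra.single g 1 := by
  rw [Mg, map_prod]
  have : ∀ i, phiA n (X i ^ (g i).val)
      = AddMonoidAlgebra.single (Pi.single i (g i)) (1 : ℤ) := by
    intro i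
    rw [phiA_X_pow, show ((g i).val : ZMod (n i)) = g i from ZMod.natCast_rightInverse (g i)]
  simp only [this]
  rw [prod_single_one, Finset.univ_sum_single]

lemma phiA_gen (i : Fin d) : phiA n ((X i : MvPolynomial (Fin d) ℤ) ^ n i - 1) = 0 := by
  rw [map_sub, phiA_X_pow, map_one]
  simp [AddMonoidAlgebra.one_def]

lemma Jid_le_ker : Jid n ≤ RingHom.ker (phiA n).toRingHom := by
  rw [Jid, Ideal.span_le]
  rintro _ ⟨i, rfl⟩
  exact phiA_gen n i


/-- reduction map -/
noncomputable def redA (a : AddMonoidAlgebra ℤ (∀ i, ZMod (n i))) : MvPolynomial (Fin d) ℤ :=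
  ∑ g : ∀ i, ZMod (n i), C (a.coeff g) * Mg n g

lemma redA_add (a b : AddMonoidAlgebra ℤ (∀ i, ZMod (n i))) :
    redA n (a + b) = redA n a + redA n b := by
  simp only [redA]
  rw [← Finset.sum_add_distrib]
  refine Finset.sum_congr rfl fun g _ => ?_
  rw [AddMonoidAlgebra.coeff_add, Finsupp.add_apply, map_add, add_mul]

lemma redA_zero : redA n 0 = 0 := by simp [redA]

lemma redA_single (g : ∀ i, ZMod (n i)) (z : ℤ) :
    redA n (AddMonoidAlgebra.single g z) = C z * Mg n g := by
  rw [redA]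
  rw [Finset.sum_eq_single g]
  · simp [AddMonoidAlgebra.coeff_single]
  · intro b _ hb
    rw [AddMonoidAlgebra.coeff_single, Finsupp.single_apply, if_neg (fun h => hb h.symm)]
    simp
  · simp

lemma step_mem (hn : ∀ i, 2 ≤ n i) (g : ∀ i, ZMod (n i)) (i : Fin d) :
    Mg n g * X i - Mg n (g + Pi.single i 1) ∈ Jid n := by
  classical
  set g' := g + Pi.single i 1 with hg'
  have hval : ∀ j, j ≠ i → (g' j).val = (g j).val := by
    intro j hj
    simp [hg', Pi.single_eq_of_ne hj]
  have hone : (1 : ZMod (n i)).val = 1 := by rw [ZMod.val_one_eq_one_mod]; exact Nat.mod_eq_of_lt (by have := hn i; omega)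
  have hvi : (g' i).val = ((g i).val + 1) % n i := by
    simp only [hg', Pi.add_apply, Pi.single_eq_same]
    rw [ZMod.val_add, hone]
  have hMg : Mg n g = X i ^ (g i).val * ∏ j ∈ univ.erase i, X j ^ (g j).val := by
    rw [Mg, ← Finset.mul_prod_erase _ _ (mem_univ i)]
  have hMg' : Mg n g' = X i ^ (g' i).val * ∏ j ∈ univ.erase i, X j ^ (g j).val := by
    rw [Mg, ← Finset.mul_prod_erase _ _ (mem_univ i)]
    congr 1
    exact Finset.prod_congr rfl fun j hj => by rw [hval j (Finset.mem_erase.mp hj).1]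
  have hlt : (g i).val < n i := ZMod.val_lt (g i)
  by_cases hcase : (g i).val + 1 < n i
  · have : (g' i).val = (g i).val + 1 := by rw [hvi, Nat.mod_eq_of_lt hcase]
    have : Mg n g * X i - Mg n g' = 0 := by
      rw [hMg, hMg', this]; ring
    rw [this]; exact zero_mem _
  · have hni : (g i).val + 1 = n i := by omega
    have hz : (g' i).val = 0 := by rw [hvi, hni, Nat.mod_self]
    have : Mg n g * X i - Mg n g' =
        ((X i : MvPolynomial (Fin d) ℤ) ^ n i - 1) * ∏ j ∈ univ.erase i, X j ^ (g j).val := by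
      have hx : (X i : MvPolynomial (Fin d) ℤ) ^ (g i).val * X i = X i ^ n i := by
        rw [← pow_succ, hni]
      rw [hMg, hMg', hz, ← hx]; ring
    rw [this]
    exact Ideal.mul_mem_right _ _ (Ideal.subset_span ⟨i, rfl⟩)

lemma redA_mul_single_mem (hn : ∀ i, 2 ≤ n i) (i : Fin d)
    (a : AddMonoidAlgebra ℤ (∀ i, ZMod (n i))) :
    redA n (a * AddMonoidAlgebra.single (Pi.single i 1) 1) - redA n a * X i ∈ Jid n := by
  induction a using AddMonoidAlgebra.induction_linear with
  | zero => simpa [redA_zero] using (zero_mem (Jid n))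
  | add p q hp hq =>
      have h := add_mem hp hq
      rw [add_mul, redA_add, redA_add]
      convert h using 1
      ring
  | single g z =>
      rw [AddMonoidAlgebra.single_mul_single, mul_one, redA_single, redA_single]
      have : C z * Mg n (g + Pi.single i 1) - C z * Mg n g * X i
          = -(C z * (Mg n g * X i - Mg n (g + Pi.single i 1))) := by ring
      rw [this]
      exact neg_mem (Ideal.mul_mem_left _ _ (step_mem n hn g i))

lemma sub_redA_mem (hn : ∀ i, 2 ≤ n i) (p : MvPolynomial (Fin d) ℤ) :
    p - redA n (phiA n p) ∈ Jid n := by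
  induction p using MvPolynomial.induction_on with
  | C a =>
      have h1 : phiA n (C a) = AddMonoidAlgebra.single 0 a := by
        rw [phiA, aeval_C, AddMonoidAlgebra.coe_algebraMap]
        rfl
      rw [h1, redA_single]
      have : Mg n 0 = 1 := by
        rw [Mg]
        refine Finset.prod_eq_one fun i _ => ?_
        norm_num [ZMod.val_zero]
      rw [this, mul_one]
      simpa using (zero_mem (Jid n))
  | add p q hp hq =>
      have := add_mem hp hq
      rw [map_add, redA_add]
      convert this using 1
      ring
  | mul_X p i hp =>
      have h2 : phiA n (p * X i) = phiA n p * AddMonoidAlgebra.single (Pi.single i 1) 1 := by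
        rw [map_mul, phiA, aeval_X]
      rw [h2]
      have := sub_mem (Ideal.mul_mem_right (X i) _ hp)
        (redA_mul_single_mem n hn i (phiA n p))
      convert this using 1
      ring

lemma mem_Jid_iff (hn : ∀ i, 2 ≤ n i) (p : MvPolynomial (Fin d) ℤ) :
    p ∈ Jid n ↔ phiA n p = 0 := by
  constructor
  · intro h; exact Jid_le_ker n h
  · intro h
    have := sub_redA_mem n hn p
    rwa [h, redA_zero, sub_zero] at this


lemma T_eq :
    (∏ i, ∑ j ∈ Finset.range (n i), (X i : MvPolynomial (Fin d) ℤ) ^ j)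
      = ∑ g : ∀ i, ZMod (n i), Mg n g := by
  classical
  rw [Finset.prod_univ_sum]
  refine Finset.sum_nbij' (fun p i => ((p i : ℕ) : ZMod (n i))) (fun g i => (g i).val)
    (fun p _ => Finset.mem_univ _) ?_ ?_ ?_ ?_
  · intro g _
    rw [Fintype.mem_piFinset]
    exact fun i => Finset.mem_range.mpr (ZMod.val_lt (g i))
  · intro p hp
    rw [Fintype.mem_piFinset] at hp
    funext i
    exact ZMod.val_cast_of_lt (Finset.mem_range.mp (hp i))
  · intro g _
    funext i
    exact ZMod.natCast_rightInverse (g i)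
  · intro p hp
    rw [Fintype.mem_piFinset] at hp
    rw [Mg]
    refine Finset.prod_congr rfl fun i _ => ?_
    rw [ZMod.val_cast_of_lt (Finset.mem_range.mp (hp i))]

lemma apply_prod_sum (C S : Finset (∀ i, ZMod (n i))) (v : ∀ i, ZMod (n i)) :
    (((∑ c ∈ C, AddMonoidAlgebra.single c (1:ℤ)) * (∑ s ∈ S, AddMonoidAlgebra.single s 1) :
      AddMonoidAlgebra ℤ (∀ i, ZMod (n i))).coeff v)
      = ((C.filter fun c => v - c ∈ S).card : ℤ) := by
  classical
  rw [Finset.sum_mul_sum]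
  simp only [AddMonoidAlgebra.single_mul_single, one_mul]
  rw [AddMonoidAlgebra.coeff_sum, Finsupp.finset_sum_apply]
  rw [← Finset.sum_boole]
  refine Finset.sum_congr rfl fun c _ => ?_
  rw [AddMonoidAlgebra.coeff_sum, Finsupp.finset_sum_apply]
  have : ∀ s : ∀ i, ZMod (n i),
      (AddMonoidAlgebra.single (c + s) (1:ℤ) : AddMonoidAlgebra ℤ (∀ i, ZMod (n i))).coeff v
        = if s = v - c then 1 else 0 := by
    intro s
    rw [AddMonoidAlgebra.coeff_single, Finsupp.single_apply]
    congr 1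
    simp only [eq_iff_iff]
    rw [eq_sub_iff_add_eq']
  simp only [this]
  rw [Finset.sum_ite_eq' S (v - c) (fun _ => (1:ℤ))]

lemma sum_single_apply (v : ∀ i, ZMod (n i)) :
    (∑ g : ∀ i, ZMod (n i), (AddMonoidAlgebra.single g (1:ℤ) :
      AddMonoidAlgebra ℤ (∀ i, ZMod (n i)))).coeff v = 1 := by
  classical
  rw [AddMonoidAlgebra.coeff_sum, Finsupp.finset_sum_apply]
  simp only [AddMonoidAlgebra.coeff_single, Finsupp.single_apply]
  rw [Finset.sum_ite_eq' Finset.univ v (fun _ => (1:ℤ)), if_pos (Finset.mem_univ v)]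

lemma euniq {α : Type*} [DecidableEq α] (C : Finset α) (P : α → Prop) [DecidablePred P] :
    (∃! c, c ∈ C ∧ P c) ↔ (C.filter P).card = 1 := by
  rw [Finset.card_eq_one]
  constructor
  · rintro ⟨a, ⟨haC, haP⟩, hu⟩
    refine ⟨a, Finset.eq_singleton_iff_unique_mem.mpr ⟨Finset.mem_filter.mpr ⟨haC, haP⟩, ?_⟩⟩
    intro x hx
    obtain ⟨h1, h2⟩ := Finset.mem_filter.mp hx
    exact hu x ⟨h1, h2⟩
  · rintro ⟨a, ha⟩
    have haa := Finset.mem_filter.mp (ha ▸ Finset.mem_singleton_self a)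
    refine ⟨a, ⟨haa.1, haa.2⟩, ?_⟩
    intro x ⟨h1, h2⟩
    have := Finset.mem_filter.mpr ⟨h1, h2⟩
    rw [ha, Finset.mem_singleton] at this
    exact this

lemma adj_iff (S : Finset (∀ i, ZMod (n i))) (h0 : (0 : ∀ i, ZMod (n i)) ∉ S)
    (hinv : ∀ s ∈ S, -s ∈ S) (v c : ∀ i, ZMod (n i)) :
    (cayley (S : Set (∀ i, ZMod (n i)))).Adj v c ↔ v - c ∈ S := by
  rw [cayley, SimpleGraph.fromRel_adj]
  constructor
  · rintro ⟨hne, h | h⟩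
    · change c - v ∈ (S : Set _) at h
      have := hinv _ (Finset.mem_coe.mp h)
      rwa [neg_sub] at this
    · exact Finset.mem_coe.mp h
  · intro h
    refine ⟨?_, Or.inr (Finset.mem_coe.mpr h)⟩
    intro hvc
    rw [hvc, sub_self] at h
    exact h0 h

end Aux


open MvPolynomial in
/-- Lemma 4.7: for `G = ℤ_{n₁} × ⋯ × ℤ_{n_d}` and an inverse-closed subset `S` of
`G ∖ {0}`, a subset `C` of `G` is a total perfect code in `Cay(G, S)` iff there
are integer polynomials `q_I^{(g)}`, each divisible by
`(∏ i, x_i^{g_i}) ⬝ ∏_{i ∈ I} (x_i^{n_i} - 1)`, with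
`f_C ⬝ f_S = Σ_{∅ ≠ I} Σ_g q_I^{(g)} + ∏ i (1 + x_i + ⋯ + x_i^{n_i - 1})`. -/
theorem totalPerfectCode_iff_polynomial (d : ℕ) (hd : 1 ≤ d) (n : Fin d → ℕ)
    (hn : ∀ i, 2 ≤ n i) [∀ i, NeZero (n i)]
    (S : Finset (∀ i, ZMod (n i))) (h0 : (0 : ∀ i, ZMod (n i)) ∉ S)
    (hinv : ∀ s ∈ S, -s ∈ S) (C : Finset (∀ i, ZMod (n i))) :
    IsTotalPerfectCode (cayley (S : Set (∀ i, ZMod (n i)))) (C : Set (∀ i, ZMod (n i))) ↔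
      ∃ q : Finset (Fin d) → (∀ i, ZMod (n i)) → MvPolynomial (Fin d) ℤ,
        (∀ I : Finset (Fin d), I.Nonempty → ∀ g : ∀ i, ZMod (n i),
          ((∏ i, (X i : MvPolynomial (Fin d) ℤ) ^ (g i).val) *
            ∏ i ∈ I, ((X i : MvPolynomial (Fin d) ℤ) ^ (n i) - 1)) ∣ q I g) ∧
        (∑ c ∈ C, ∏ i, (X i : MvPolynomial (Fin d) ℤ) ^ (c i).val) *
            (∑ s ∈ S, ∏ i, (X i : MvPolynomial (Fin d) ℤ) ^ (s i).val) =
          (∑ I ∈ Finset.univ.filter (Finset.Nonempty (α := Fin d)),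
              ∑ g : ∀ i, ZMod (n i), q I g) +
            ∏ i, ∑ j ∈ Finset.range (n i), (X i : MvPolynomial (Fin d) ℤ) ^ j := by
  
  have hM : ∀ g : ∀ i, ZMod (n i),
      (∏ i, (X i : MvPolynomial (Fin d) ℤ) ^ (g i).val) = Mg n g := fun _ => rfl
  have h1 : IsTotalPerfectCode (cayley (S : Set (∀ i, ZMod (n i)))) (C : Set (∀ i, ZMod (n i)))
      ↔ ∀ v, ((C.filter fun c => v - c ∈ S).card = 1) := by
    unfold IsTotalPerfectCode
    refine forall_congr' fun v => ?_
    rw [← euniq C (fun c => v - c ∈ S)]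
    exact existsUnique_congr fun c =>
      and_congr Finset.mem_coe (adj_iff n S h0 hinv v c)
  have h2 : ∀ v, (phiA n ((∑ c ∈ C, Mg n c) * (∑ s ∈ S, Mg n s))).coeff v
      = ((C.filter fun c => v - c ∈ S).card : ℤ) := by
    intro v
    rw [map_mul, map_sum, map_sum]
    simp only [phiA_Mg]
    exact apply_prod_sum n C S v
  have h3 : ∀ v, (phiA n (∑ g : ∀ i, ZMod (n i), Mg n g)).coeff v = 1 := by
    intro v
    rw [map_sum]
    simp only [phiA_Mg]
    exact sum_single_apply n v
  have key : IsTotalPerfectCode (cayley (S : Set (∀ i, ZMod (n i)))) (C : Set (∀ i, ZMod (n i)))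
      ↔ (∑ c ∈ C, Mg n c) * (∑ s ∈ S, Mg n s) - ∑ g : ∀ i, ZMod (n i), Mg n g ∈ Jid n := by
    rw [h1, mem_Jid_iff n hn, map_sub, sub_eq_zero]
    constructor
    · intro h
      refine AddMonoidAlgebra.ext (Finsupp.ext fun v => ?_)
      rw [h2 v, h3 v]
      exact_mod_cast h v
    · intro h v
      have hv := Finsupp.ext_iff.mp (congrArg AddMonoidAlgebra.coeff h) v
      rw [h2 v, h3 v] at hv
      exact_mod_cast hv
  simp only [hM]
  rw [T_eq n, key]
  constructor
  · intro hmem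
    rw [Jid] at hmem
    obtain ⟨co, hco⟩ := (Submodule.mem_span_range_iff_exists_fun (MvPolynomial (Fin d) ℤ)).mp hmem
    simp only [smul_eq_mul] at hco
    refine ⟨fun I g => if g = 0 then
      ∑ i ∈ I, (if I = {i} then co i * ((X i : MvPolynomial (Fin d) ℤ) ^ n i - 1) else 0)
      else 0, ?_, ?_⟩
    · intro I hI g
      dsimp only
      by_cases hg : g = 0
      · subst hg
        rw [if_pos rfl]
        have hm0 : Mg n (0 : ∀ i, ZMod (n i)) = 1 := by
          rw [Mg]
          exact Finset.prod_eq_one fun i _ => by norm_num [ZMod.val_zero]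
        rw [hm0, one_mul]
        refine Finset.dvd_sum fun i hi => ?_
        by_cases hIi : I = {i}
        · rw [if_pos hIi, hIi, Finset.prod_singleton]
          exact Dvd.intro_left _ rfl
        · rw [if_neg hIi]
          exact dvd_zero _
      · rw [if_neg hg]
        exact dvd_zero _
    · dsimp only
      have hsum : (∑ I ∈ Finset.univ.filter (Finset.Nonempty (α := Fin d)),
          ∑ g : ∀ i, ZMod (n i), (if g = 0 then
            ∑ i ∈ I, (if I = {i} then co i * ((X i : MvPolynomial (Fin d) ℤ) ^ n i - 1) else 0)
            else 0))
          = ∑ i, co i * ((X i : MvPolynomial (Fin d) ℤ) ^ n i - 1) := by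
        have step1 : ∀ I : Finset (Fin d),
            (∑ g : ∀ i, ZMod (n i), (if g = 0 then
              ∑ i ∈ I, (if I = {i} then co i * ((X i : MvPolynomial (Fin d) ℤ) ^ n i - 1) else 0)
              else 0))
            = ∑ i ∈ I, (if I = {i} then co i * ((X i : MvPolynomial (Fin d) ℤ) ^ n i - 1) else 0) := by
          intro I
          rw [Finset.sum_ite_eq' Finset.univ (0 : ∀ i, ZMod (n i)), if_pos (Finset.mem_univ _)]
        simp only [step1]
        have step2 : (∑ I ∈ Finset.univ.filter (Finset.Nonempty (α := Fin d)),
            ∑ i ∈ I, (if I = {i} then co i * ((X i : MvPolynomial (Fin d) ℤ) ^ n i - 1) else 0))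
            = ∑ I : Finset (Fin d),
            ∑ i ∈ I, (if I = {i} then co i * ((X i : MvPolynomial (Fin d) ℤ) ^ n i - 1) else 0) := by
          refine Finset.sum_subset (Finset.filter_subset _ _) fun I _ hI => ?_
          rw [Finset.mem_filter, not_and] at hI
          have : I = ∅ := Finset.not_nonempty_iff_eq_empty.mp (hI (Finset.mem_univ I))
          subst this
          simp
        rw [step2]
        have step3 : ∀ I : Finset (Fin d),
            (∑ i ∈ I, (if I = {i} then co i * ((X i : MvPolynomial (Fin d) ℤ) ^ n i - 1) else 0))
            = ∑ i, (if I = {i} then co i * ((X i : MvPolynomial (Fin d) ℤ) ^ n i - 1) else 0) := by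
          intro I
          refine Finset.sum_subset (Finset.subset_univ I) fun i _ hi => ?_
          rw [if_neg]
          intro hIi
          exact hi (hIi ▸ Finset.mem_singleton_self i)
        simp only [step3]
        rw [Finset.sum_comm]
        refine Finset.sum_congr rfl fun i _ => ?_
        rw [Finset.sum_ite_eq' Finset.univ ({i} : Finset (Fin d)), if_pos (Finset.mem_univ _)]
      rw [hsum, hco]
      ring
  · rintro ⟨q, hq, heq⟩
    have hrw : (∑ c ∈ C, Mg n c) * (∑ s ∈ S, Mg n s) - ∑ g : ∀ i, ZMod (n i), Mg n g
        = ∑ I ∈ Finset.univ.filter (Finset.Nonempty (α := Fin d)),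
            ∑ g : ∀ i, ZMod (n i), q I g := by
      rw [heq]; ring
    rw [hrw]
    refine Submodule.sum_mem _ fun I hI => Submodule.sum_mem _ fun g _ => ?_
    have hIne : I.Nonempty := (Finset.mem_filter.mp hI).2
    obtain ⟨a, ha⟩ := hq I hIne g
    obtain ⟨i0, hi0⟩ := hIne
    rw [ha]
    have hdvd : ((X i0 : MvPolynomial (Fin d) ℤ) ^ n i0 - 1) ∣
        (Mg n g * ∏ i ∈ I, ((X i : MvPolynomial (Fin d) ℤ) ^ n i - 1)) * a :=
      ((Finset.dvd_prod_of_mem _ hi0).mul_left _).mul_right _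
    obtain ⟨b, hb⟩ := hdvd
    rw [hb]
    exact Ideal.mul_mem_right _ _ (Ideal.subset_span ⟨i0, rfl⟩)
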